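/- Let A be an m×n integer matrix with linearly independent rows, and suppose the columns of B form an LLL-reduced basis of the lattice L_N(A) = { x ∈ Z^n : Ax = 0 }. Then for Q_N = { y ∈ R^{n−m} : ℓ_2 − x_0 ≤ By ≤ w_2 − x_0 }, width(e_{n−m}, Q_N) ≤ gcd(A) · 2^{(n−m−1)/4} · ‖w_2 − ℓ_2‖ / det(A Aᵀ)^{1/(2(n−m))}. -/

import Mathlib

/-- The Gram-Schmidt orthogonalization of a finite family of vectors. -/
noncomputable def gsE {E : Type*} [NormedAddCommGroup E] [InnerProductSpace ℝ E] {r : ℕ}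
    (c : Fin r → E) : Fin r → E :=
  haveI : WellFoundedLT (Fin r) := inferInstance
  InnerProductSpace.gramSchmidt ℝ c

/-- The columns of a real matrix, viewed as vectors in Euclidean space. -/
noncomputable def colsE (m r : ℕ) (B : Matrix (Fin m) (Fin r) ℝ) :
    Fin r → EuclideanSpace ℝ (Fin m) :=
  fun j => (WithLp.equiv 2 (Fin m → ℝ)).symm fun i => B i j

/-- Gram-Schmidt coefficients `μ_{ij} = ⟨b_i, b_j^*⟩ / ‖b_j^*‖²`. -/
noncomputable def muGS {E : Type*} [NormedAddCommGroup E] [InnerProductSpace ℝ E] {r : ℕ}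
    (b : Fin r → E) (i j : Fin r) : ℝ :=
  (inner ℝ (b i) (gsE b j) : ℝ) / ‖gsE b j‖ ^ 2

/-- A linearly independent family is LLL reduced if `|μ_{ij}| ≤ 1/2` for `j < i`, and
`‖μ_{i,i-1} b_{i-1}^* + b_i^*‖² ≥ (3/4) ‖b_{i-1}^*‖²` for consecutive indices. -/
def LLLReduced {E : Type*} [NormedAddCommGroup E] [InnerProductSpace ℝ E] {r : ℕ}
    (b : Fin r → E) : Prop :=
  LinearIndependent ℝ b ∧
  (∀ i j : Fin r, j < i → |muGS b i j| ≤ 1 / 2) ∧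
  (∀ i : Fin r, ∀ h : (i : ℕ) + 1 < r,
    ‖muGS b ⟨(i : ℕ) + 1, h⟩ i • gsE b i + gsE b ⟨(i : ℕ) + 1, h⟩‖ ^ 2
      ≥ 3 / 4 * ‖gsE b i‖ ^ 2)

/-- The gcd of the `m × m` subdeterminants (maximal minors) of an `m × n` integer matrix. -/
noncomputable def gcdMinors (m n : ℕ) (A : Matrix (Fin m) (Fin n) ℤ) : ℕ :=
  Finset.univ.gcd fun f : Fin m ↪ Fin n => (A.submatrix id f).det.natAbs

instance finWFLT (r : ℕ) : WellFoundedLT (Fin r) := inferInstance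

lemma width_bound_aux {S : Set ℝ} (hne : S.Nonempty) {Cst : ℝ}
    (h : ∀ a ∈ S, ∀ b ∈ S, a - b ≤ Cst) : sSup S - sInf S ≤ Cst := by
  have h1 : sSup S ≤ Cst + sInf S := csSup_le hne (fun a ha => by
    have h2 : a - Cst ≤ sInf S := le_csInf hne (fun b hb => by linarith [h a ha b hb])
    linarith)
  linarith

section GS
variable {E : Type*} [NormedAddCommGroup E] [InnerProductSpace ℝ E] {r : ℕ}

lemma gsE_eq (c : Fin r → E) : gsE c = InnerProductSpace.gramSchmidt ℝ c := rfl

lemma gsE_ortho (c : Fin r → E) {i j : Fin r} (h : i ≠ j) :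
    (inner ℝ (gsE c i) (gsE c j) : ℝ) = 0 :=
  InnerProductSpace.gramSchmidt_orthogonal ℝ c h

lemma inner_gsE_self (c : Fin r → E) (i : Fin r) :
    (inner ℝ (gsE c i) (c i) : ℝ) = ‖gsE c i‖ ^ 2 := by
  have hproj : ∀ j ∈ Finset.Iio i, (inner ℝ (gsE c i)
      ((Submodule.span ℝ {InnerProductSpace.gramSchmidt ℝ c j}).starProjection (c i)) : ℝ) = 0 := by
    intro j hj
    rw [Submodule.starProjection_singleton, inner_smul_right, ← gsE_eq c,
      gsE_ortho c (Finset.mem_Iio.mp hj).ne']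
    ring
  conv_lhs => rw [InnerProductSpace.gramSchmidt_def' ℝ c i]
  rw [inner_add_right, inner_sum, Finset.sum_eq_zero hproj, ← gsE_eq c,
    real_inner_self_eq_norm_sq]
  ring

lemma inner_gsE_of_lt (c : Fin r → E) {i j : Fin r} (h : j < i) :
    (inner ℝ (gsE c i) (c j) : ℝ) = 0 := by
  have hmem : c j ∈ Submodule.span ℝ (InnerProductSpace.gramSchmidt ℝ c '' Set.Iic j) :=
    InnerProductSpace.mem_span_gramSchmidt ℝ c le_rfl
  have key : ∀ x ∈ Submodule.span ℝ (InnerProductSpace.gramSchmidt ℝ c '' Set.Iic j),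
      (inner ℝ (gsE c i) x : ℝ) = 0 := by
    intro x hx
    induction hx using Submodule.span_induction with
    | mem x hx =>
      obtain ⟨k, hk, rfl⟩ := hx
      exact gsE_ortho c (lt_of_le_of_lt hk h).ne'
    | zero => exact inner_zero_right _
    | add x y _ _ hx hy => rw [inner_add_right, hx, hy]; ring
    | smul a x _ hx => rw [inner_smul_right, hx]; ring
  exact key _ hmem

lemma gsE_decomp (c : Fin r → E) (hc : LinearIndependent ℝ c) (j : Fin r) :
    c j = ∑ k : Fin r, ((inner ℝ (gsE c k) (c j) : ℝ) / ‖gsE c k‖ ^ 2) • gsE c k := by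
  set u : E := c j - ∑ k : Fin r, ((inner ℝ (gsE c k) (c j) : ℝ) / ‖gsE c k‖ ^ 2) • gsE c k with hu
  have hnz : ∀ k : Fin r, gsE c k ≠ 0 := fun k => InnerProductSpace.gramSchmidt_ne_zero k hc
  have horth : ∀ l : Fin r, (inner ℝ (gsE c l) u : ℝ) = 0 := by
    intro l
    rw [hu, inner_sub_right, inner_sum]
    have : ∀ k ∈ Finset.univ, (inner ℝ (gsE c l)
        (((inner ℝ (gsE c k) (c j) : ℝ) / ‖gsE c k‖ ^ 2) • gsE c k) : ℝ)
        = if k = l then (inner ℝ (gsE c l) (c j) : ℝ) else 0 := by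
      intro k _
      rw [inner_smul_right]
      by_cases hkl : k = l
      · subst hkl
        rw [if_pos rfl, real_inner_self_eq_norm_sq]
        field_simp [pow_ne_zero 2 (norm_ne_zero_iff.mpr (hnz k))]
        exact mul_div_cancel_right₀ _ (norm_ne_zero_iff.mpr (hnz k))
      · rw [if_neg hkl, gsE_ortho c (fun h => hkl h.symm)]
        ring
    rw [Finset.sum_congr rfl this, Finset.sum_ite_eq' Finset.univ l
      (fun _ => (inner ℝ (gsE c l) (c j) : ℝ))]
    simp
  have humem : u ∈ Submodule.span ℝ (Set.range (gsE c)) := by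
    apply Submodule.sub_mem
    · refine Submodule.span_mono ?_ (InnerProductSpace.mem_span_gramSchmidt ℝ c (le_refl j))
      rintro x ⟨k, _, rfl⟩; exact ⟨k, rfl⟩
    · exact Submodule.sum_mem _ fun k _ => Submodule.smul_mem _ _
        (Submodule.subset_span ⟨k, rfl⟩)
  have hperp : ∀ x ∈ Submodule.span ℝ (Set.range (gsE c)), (inner ℝ x u : ℝ) = 0 := by
    intro x hx
    induction hx using Submodule.span_induction with
    | mem x hx => obtain ⟨k, rfl⟩ := hx; exact horth k
    | zero => exact inner_zero_left _
    | add x y _ _ hx hy => rw [inner_add_left, hx, hy]; ring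
    | smul a x _ hx => rw [inner_smul_left, hx]; ring
  have huzero : u = 0 := inner_self_eq_zero.mp (hperp u humem)
  exact sub_eq_zero.mp huzero
lemma gram_det (c : Fin r → E) (hc : LinearIndependent ℝ c) :
    (Matrix.of fun i j => (inner ℝ (c i) (c j) : ℝ)).det = ∏ i : Fin r, ‖gsE c i‖ ^ 2 := by
  classical
  have hnz : ∀ k : Fin r, gsE c k ≠ 0 := fun k => InnerProductSpace.gramSchmidt_ne_zero k hc
  have hnorm : ∀ k : Fin r, ‖gsE c k‖ ^ 2 ≠ 0 :=
    fun k => pow_ne_zero 2 (norm_ne_zero_iff.mpr (hnz k))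
  set T : Matrix (Fin r) (Fin r) ℝ :=
    Matrix.of fun i k => (inner ℝ (gsE c k) (c i) : ℝ) / ‖gsE c k‖ ^ 2 with hTdef
  set d : Fin r → ℝ := fun k => ‖gsE c k‖ ^ 2 with hd
  have hG : (Matrix.of fun i j => (inner ℝ (c i) (c j) : ℝ))
      = T * Matrix.diagonal d * T.transpose := by
    ext i j
    have hdecomp := gsE_decomp c hc j
    have : (inner ℝ (c i) (c j) : ℝ)
        = ∑ l : Fin r, ((inner ℝ (gsE c l) (c j) : ℝ) / ‖gsE c l‖ ^ 2) * (inner ℝ (c i) (gsE c l)) := by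
      conv_lhs => rw [hdecomp]
      rw [inner_sum]
      exact Finset.sum_congr rfl fun l _ => by rw [inner_smul_right]
    have hil : ∀ l : Fin r, (inner ℝ (c i) (gsE c l) : ℝ) = T i l * d l := by
      intro l
      rw [real_inner_comm, hTdef, hd]
      simp only [Matrix.of_apply]
      exact (div_mul_cancel₀ _ (hnorm l)).symm
    rw [Matrix.mul_apply, Matrix.of_apply, this]
    refine Finset.sum_congr rfl fun l _ => ?_
    rw [Matrix.mul_diagonal, Matrix.transpose_apply, hil l]
    simp only [hTdef, Matrix.of_apply]
    ring
  have hTdiag : ∀ i : Fin r, T i i = 1 := by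
    intro i
    simp only [hTdef, Matrix.of_apply, inner_gsE_self c i]
    exact div_self (hnorm i)
  have hTtri : T.BlockTriangular ⇑OrderDual.toDual := by
    intro i j hij
    have hij' : (i : Fin r) < j := hij
    simp only [hTdef, Matrix.of_apply]
    rw [inner_gsE_of_lt c hij']
    simp
  have hdetT : T.det = 1 := by
    rw [Matrix.det_of_lowerTriangular T hTtri]
    exact Finset.prod_eq_one fun i _ => hTdiag i
  rw [hG, Matrix.det_mul, Matrix.det_mul, Matrix.det_transpose, hdetT,
    Matrix.det_diagonal]
  ring

lemma lll_step {b : Fin r → E} (h : LLLReduced b) (i : Fin r) (hi : (i : ℕ) + 1 < r) :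
    ‖gsE b i‖ ^ 2 ≤ 2 * ‖gsE b ⟨(i : ℕ) + 1, hi⟩‖ ^ 2 := by
  obtain ⟨h1, h2, h3⟩ := h
  set i' : Fin r := ⟨(i : ℕ) + 1, hi⟩ with hi'
  have hlt : i < i' := by
    rw [Fin.lt_def]; simp [hi']
  have hmu : |muGS b i' i| ≤ 1 / 2 := h2 i' i hlt
  have hnorm := h3 i hi
  have hexp : ‖muGS b i' i • gsE b i + gsE b i'‖ ^ 2
      = (muGS b i' i) ^ 2 * ‖gsE b i‖ ^ 2 + ‖gsE b i'‖ ^ 2 := by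
    rw [norm_add_sq_real, inner_smul_left, gsE_ortho b hlt.ne, norm_smul]
    rw [mul_pow, Real.norm_eq_abs, sq_abs]
    ring
  rw [hexp] at hnorm
  have hmu2 : (muGS b i' i) ^ 2 ≤ 1 / 4 := by
    rw [← sq_abs]
    nlinarith [abs_nonneg (muGS b i' i)]
  nlinarith [sq_nonneg ‖gsE b i‖, sq_nonneg ‖gsE b i'‖]

lemma lll_chain {b : Fin r → E} (h : LLLReduced b) :
    ∀ (dd : ℕ) (i : Fin r) (hd : (i : ℕ) + dd < r),
      ‖gsE b i‖ ^ 2 ≤ 2 ^ dd * ‖gsE b ⟨(i : ℕ) + dd, hd⟩‖ ^ 2 := by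
  intro dd
  induction dd with
  | zero => intro i hd; simp
  | succ k ih =>
    intro i hd
    have hi1 : (i : ℕ) + 1 < r := by omega
    have step := lll_step h i hi1
    have ihs := ih ⟨(i : ℕ) + 1, hi1⟩ (by show (i : ℕ) + 1 + k < r; omega)
    have heq : (⟨(i : ℕ) + 1 + k, by omega⟩ : Fin r) = ⟨(i : ℕ) + (k + 1), hd⟩ := by
      apply Fin.ext
      show (i : ℕ) + 1 + k = (i : ℕ) + (k + 1)
      omega
    rw [heq] at ihs
    calc ‖gsE b i‖ ^ 2 ≤ 2 * ‖gsE b ⟨(i : ℕ) + 1, hi1⟩‖ ^ 2 := step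
      _ ≤ 2 * (2 ^ k * ‖gsE b ⟨(i : ℕ) + (k + 1), hd⟩‖ ^ 2) := by linarith
      _ = 2 ^ (k + 1) * ‖gsE b ⟨(i : ℕ) + (k + 1), hd⟩‖ ^ 2 := by ring

lemma lll_le_last {b : Fin r → E} (h : LLLReduced b) (last : Fin r)
    (hl : (last : ℕ) = r - 1) (i : Fin r) :
    ‖gsE b i‖ ^ 2 ≤ 2 ^ ((last : ℕ) - (i : ℕ)) * ‖gsE b last‖ ^ 2 := by
  have hile : (i : ℕ) ≤ (last : ℕ) := by omega
  have hd : (i : ℕ) + ((last : ℕ) - (i : ℕ)) < r := by omega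
  have := lll_chain h ((last : ℕ) - (i : ℕ)) i hd
  have heq : (⟨(i : ℕ) + ((last : ℕ) - (i : ℕ)), hd⟩ : Fin r) = last := by
    apply Fin.ext; simp; omega
  rwa [heq] at this

end GS

lemma gcdMinors_dvd_det_mul (m n : ℕ) (A : Matrix (Fin m) (Fin n) ℤ)
    (D : Matrix (Fin n) (Fin m) ℤ) : (gcdMinors m n A : ℤ) ∣ (A * D).det := by
  classical
  rw [← Matrix.det_transpose]
  have hrows : ((A * D).transpose : Matrix (Fin m) (Fin m) ℤ)
      = fun i => ∑ j : Fin n, D j i • A.transpose j := by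
    funext i k
    simp [Matrix.mul_apply, Finset.sum_apply, mul_comm]
  have expand : ((A * D).transpose).det
      = ∑ p : Fin m → Fin n,
          (∏ i : Fin m, D (p i) i) • Matrix.detRowAlternating (fun i : Fin m => A.transpose (p i)) := by
    show Matrix.detRowAlternating ((A * D).transpose) = _
    rw [hrows]
    rw [show (Matrix.detRowAlternating ((fun i => ∑ j : Fin n, D j i • A.transpose j)))
        = ∑ p : Fin m → Fin n, Matrix.detRowAlternating (fun i : Fin m => D (p i) i • A.transpose (p i)) from
      (Matrix.detRowAlternating (R := ℤ) (n := Fin m)).toMultilinearMap.map_sum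
        (fun (i : Fin m) (j : Fin n) => D j i • A.transpose j)]
    refine Finset.sum_congr rfl fun p _ => ?_
    rw [show (Matrix.detRowAlternating (fun i : Fin m => D (p i) i • A.transpose (p i)))
        = (∏ i : Fin m, D (p i) i) • Matrix.detRowAlternating (fun i : Fin m => A.transpose (p i)) from
      (Matrix.detRowAlternating (R := ℤ) (n := Fin m)).toMultilinearMap.map_smul_univ
        (fun i => D (p i) i) (fun i => A.transpose (p i))]
  rw [expand]
  apply Finset.dvd_sum
  intro p _
  by_cases hp : Function.Injective p
  · set e : Fin m ↪ Fin n := ⟨p, hp⟩ with he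
    have hsub : Matrix.detRowAlternating (fun i : Fin m => A.transpose (p i))
        = (A.submatrix id e).det := by
      rw [← Matrix.det_transpose (A.submatrix id e)]
      rfl
    rw [hsub, smul_eq_mul]
    apply Dvd.dvd.mul_left
    have hg : gcdMinors m n A ∣ ((A.submatrix id e).det).natAbs :=
      Finset.gcd_dvd (Finset.mem_univ e)
    exact Int.dvd_natAbs.mp (Int.natCast_dvd_natCast.mpr hg)
  · obtain ⟨i, j, hij, hne⟩ := Function.not_injective_iff.mp hp
    have hz : Matrix.detRowAlternating (fun i : Fin m => A.transpose (p i)) = 0 := by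
      have heq : (Matrix.of fun i : Fin m => A.transpose (p i)) i
          = (Matrix.of fun i : Fin m => A.transpose (p i)) j := by
        funext k
        simp only [Matrix.of_apply]
        rw [hij]
      exact Matrix.det_zero_of_row_eq hne heq
    rw [hz, smul_zero]
    exact dvd_zero _

lemma detAAT_ne_zero (m n : ℕ) (A : Matrix (Fin m) (Fin n) ℤ)
    (hA : LinearIndependent ℚ (fun i : Fin m => fun j : Fin n => (A i j : ℚ))) :
    (A * A.transpose).det ≠ 0 := by
  classical
  set AQ : Matrix (Fin m) (Fin n) ℚ := A.map (Int.cast : ℤ → ℚ) with hAQ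
  intro h0
  have hcast : ((A * A.transpose).det : ℚ) = (AQ * AQ.transpose).det := by
    have h1 : ((A * A.transpose).det : ℚ) = (Int.castRingHom ℚ) ((A * A.transpose).det) := rfl
    rw [h1, RingHom.map_det]
    simp only [RingHom.mapMatrix_apply]
    rw [Matrix.map_mul, Matrix.transpose_map]
    rfl
  have hQ0 : (AQ * AQ.transpose).det = 0 := by rw [← hcast, h0]; simp
  obtain ⟨v, hv, hv0⟩ := Matrix.exists_mulVec_eq_zero_iff.mpr hQ0
  have hu : AQ.transpose.mulVec v = 0 := by
    have h1 : dotProduct v ((AQ * AQ.transpose).mulVec v) = 0 := by rw [hv0]; simp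
    rw [← Matrix.mulVec_mulVec, Matrix.dotProduct_mulVec, ← Matrix.mulVec_transpose] at h1
    exact (dotProduct_self_eq_zero).mp h1
  apply hv
  have hsum : ∑ i : Fin m, v i • (fun j : Fin n => ((A i j : ℚ))) = 0 := by
    funext j
    have hj := congrFun hu j
    simp only [Matrix.mulVec, dotProduct, Matrix.transpose_apply, Pi.zero_apply] at hj
    simp only [Finset.sum_apply, Pi.smul_apply, smul_eq_mul, Pi.zero_apply]
    rw [← hj]
    refine Finset.sum_congr rfl fun i _ => ?_
    simp [AQ, mul_comm]
  have hz := Fintype.linearIndependent_iff.mp hA v hsum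
  funext i
  exact hz i

lemma det_AAT_eq_gcd_sq_mul (m n : ℕ) (hmn : m < n)
    (A : Matrix (Fin m) (Fin n) ℤ)
    (B : Matrix (Fin n) (Fin (n - m)) ℤ)
    (hBnull : ∀ j, A.mulVec (fun i => B i j) = 0)
    (hBspan : ∀ x : Fin n → ℤ, A.mulVec x = 0 → ∃ c : Fin (n - m) → ℤ, x = B.mulVec c)
    (hBli : LinearIndependent ℤ (fun j : Fin (n - m) => (fun i => B i j : Fin n → ℤ)))
    (hBdet : (B.transpose * B).det ≠ 0) :
    (A * A.transpose).det = (gcdMinors m n A : ℤ) ^ 2 * (B.transpose * B).det := by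
  classical
  have hr : m + (n - m) = n := by omega
  set φ : (Fin n → ℤ) →ₗ[ℤ] (Fin m → ℤ) := Matrix.mulVecLin A with hφ
  set K : Submodule ℤ (Fin n → ℤ) := LinearMap.ker φ with hK
  set bcols : Fin (n - m) → (Fin n → ℤ) := fun j => (fun i => B i j) with hbcols
  have hker : ∀ j, bcols j ∈ K := by
    intro j
    simp only [hK, LinearMap.mem_ker, hφ, Matrix.mulVecLin_apply]
    exact hBnull j
  set inK : Fin (n - m) → K := fun j => ⟨bcols j, hker j⟩ with hinK
  have hliK : LinearIndependent ℤ inK := by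
    apply LinearIndependent.of_comp K.subtype
    have hcomp : ⇑K.subtype ∘ inK = bcols := rfl
    rw [hcomp, hbcols]
    exact hBli
  have hspanK : ⊤ ≤ Submodule.span ℤ (Set.range inK) := by
    rintro ⟨x, hx⟩ -
    have hx' : A.mulVec x = 0 := hx
    obtain ⟨c, hc⟩ := hBspan x hx'
    rw [Submodule.mem_span_range_iff_exists_fun]
    refine ⟨c, ?_⟩
    apply Subtype.ext
    push_cast [Submodule.coe_sum]
    rw [hc]
    funext i
    simp only [Finset.sum_apply, Pi.smul_apply, smul_eq_mul]
    rw [Matrix.mulVec]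
    simp [dotProduct, hbcols, hinK, mul_comm]
  set bK : Module.Basis (Fin (n - m)) ℤ K := Module.Basis.mk hliK hspanK with hbK
  -- splitting
  set ρ := φ.rangeRestrict with hρ
  obtain ⟨σ, hσ⟩ := Module.projective_lifting_property ρ LinearMap.id
    (LinearMap.surjective_rangeRestrict φ)
  have hρσ : ∀ y, ρ (σ y) = y := fun y => DFunLike.congr_fun hσ y
  set p : Submodule ℤ (Fin n → ℤ) := LinearMap.range σ with hp
  set f : (Fin n → ℤ) →ₗ[ℤ] p := LinearMap.codRestrict p (σ ∘ₗ ρ)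
    (fun x => ⟨ρ x, rfl⟩) with hf
  have hproj : ∀ x : p, f ↑x = x := by
    rintro ⟨x, y, rfl⟩
    apply Subtype.ext
    show σ (ρ (σ y)) = σ y
    rw [hρσ]
  have hcompl : IsCompl p (LinearMap.ker f) := LinearMap.isCompl_of_proj hproj
  have hkerf : LinearMap.ker f = K := by
    apply le_antisymm
    · intro x hx
      have hx' : σ (ρ x) = 0 := congrArg Subtype.val hx
      have hσinj : Function.Injective σ := by
        intro a b hab
        have : ρ (σ a) = ρ (σ b) := by rw [hab]
        rwa [hρσ, hρσ] at this
      have : ρ x = 0 := by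
        apply hσinj
        rw [hx', map_zero]
      have : φ x = 0 := by
        have := congrArg Subtype.val this
        exact this
      exact this
    · intro x hx
      have hφx : φ x = 0 := hx
      apply Subtype.ext
      show σ (ρ x) = 0
      have : ρ x = 0 := Subtype.ext hφx
      rw [this, map_zero]
  rw [hkerf] at hcompl
  -- basis of the complement
  set bC := Module.Free.chooseBasis ℤ p with hbC
  set bfull : Module.Basis (Module.Free.ChooseBasisIndex ℤ p ⊕ Fin (n - m)) ℤ (Fin n → ℤ) :=
    (bC.prod bK).map (Submodule.prodEquivOfIsCompl p K hcompl) with hbfull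
  have hcard : n = Fintype.card (Module.Free.ChooseBasisIndex ℤ p) + (n - m) := by
    have h1 : Module.finrank ℤ (Fin n → ℤ) = n := by
      rw [Module.finrank_pi ℤ]
      exact Fintype.card_fin n
    have h2 : Module.finrank ℤ (Fin n → ℤ) = Fintype.card (Module.Free.ChooseBasisIndex ℤ p ⊕ Fin (n - m)) :=
      Module.finrank_eq_card_basis bfull
    rw [h1, Fintype.card_sum, Fintype.card_fin] at h2
    exact h2
  have hcardκ : Fintype.card (Module.Free.ChooseBasisIndex ℤ p) = m := by omega
  set eκ : Module.Free.ChooseBasisIndex ℤ p ≃ Fin m := Fintype.equivFinOfCardEq hcardκ with heκ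
  set v : Module.Basis (Fin m ⊕ Fin (n - m)) ℤ (Fin n → ℤ) :=
    bfull.reindex (Equiv.sumCongr eκ (Equiv.refl (Fin (n - m)))) with hv
  have hvinr : ∀ j : Fin (n - m), v (Sum.inr j) = bcols j := by
    intro j
    rw [hv, Module.Basis.reindex_apply]
    have h1 : (Equiv.sumCongr eκ (Equiv.refl (Fin (n - m)))).symm (Sum.inr j) = Sum.inr j := rfl
    rw [h1, hbfull, Module.Basis.map_apply, Module.Basis.prod_apply]
    simp only [Sum.elim_inr, Function.comp_apply, LinearMap.coe_inr]
    have h2 := DFunLike.congr_fun (Submodule.coe_prodEquivOfIsCompl p K hcompl)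
      ((0 : p), bK j)
    simp only [LinearMap.coprod_apply, Submodule.coe_subtype, LinearEquiv.coe_coe] at h2
    rw [h2, hbK, Module.Basis.mk_apply]
    simp [hinK]
  -- matrices
  set e : Module.Basis (Fin n) ℤ (Fin n → ℤ) := Pi.basisFun ℤ (Fin n) with he
  set e₀ : (Fin m ⊕ Fin (n - m)) ≃ Fin n := finSumFinEquiv.trans (finCongr hr) with he₀
  set vre : Module.Basis (Fin n) ℤ (Fin n → ℤ) := v.reindex e₀ with hvre
  set M : Matrix (Fin n) (Fin n) ℤ := e.toMatrix ⇑vre with hM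
  haveI hMinv : Invertible M := Module.Basis.invertibleToMatrix e vre
  have hMapp : ∀ (i : Fin n) (j : Fin n), M i j = v (e₀.symm j) i := by
    intro i j
    rw [hM, Module.Basis.toMatrix_apply, hvre, Module.Basis.reindex_apply, he, Pi.basisFun_repr]
  set U : Matrix (Fin n) (Fin m ⊕ Fin (n - m)) ℤ := M.submatrix id e₀ with hU
  have hUapp : ∀ (i : Fin n) (j : Fin m ⊕ Fin (n - m)), U i j = v j i := by
    intro i j
    rw [hU, Matrix.submatrix_apply, hMapp, id_eq, Equiv.symm_apply_apply]
  set Dm : Matrix (Fin n) (Fin m) ℤ := Matrix.of fun i k => v (Sum.inl k) i with hDm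
  have hUeq : U = Matrix.fromCols Dm B := by
    ext i j
    cases j with
    | inl k => rw [hUapp, Matrix.fromCols_apply_inl, hDm, Matrix.of_apply]
    | inr k =>
      rw [hUapp, Matrix.fromCols_apply_inr, hvinr, hbcols]
  set W : Matrix (Fin m ⊕ Fin (n - m)) (Fin n) ℤ := (⅟M).submatrix e₀ id with hW
  have hUW : U * W = (1 : Matrix (Fin n) (Fin n) ℤ) := by
    ext i k
    rw [Matrix.mul_apply]
    have hs : ∑ j : Fin m ⊕ Fin (n - m), U i j * W j k
        = ∑ j' : Fin n, M i j' * (⅟M) j' k :=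
      Fintype.sum_equiv e₀ _ _ (fun j => rfl)
    rw [hs, ← Matrix.mul_apply, mul_invOf_self]
  set C : Matrix (Fin n) (Fin m ⊕ Fin (n - m)) ℤ := Matrix.fromCols A.transpose B with hC
  set V : Matrix (Fin m ⊕ Fin (n - m)) (Fin m ⊕ Fin (n - m)) ℤ := W * C with hV
  have hUV : U * V = C := by rw [hV, ← Matrix.mul_assoc, hUW, Matrix.one_mul]
  have hAB : A * B = 0 := by
    ext i j
    have h := congrFun (hBnull j) i
    simp only [Matrix.mulVec, dotProduct, Pi.zero_apply] at h
    simpa [Matrix.mul_apply] using h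
  have hBtAt : B.transpose * A.transpose = 0 := by
    rw [← Matrix.transpose_mul, hAB, Matrix.transpose_zero]
  have hCtC : C.transpose * C
      = Matrix.fromBlocks (A * A.transpose) 0 0 (B.transpose * B) := by
    rw [hC, Matrix.transpose_fromCols, Matrix.fromRows_mul_fromCols,
      Matrix.transpose_transpose, hAB, hBtAt]
  have hdet1 : (C.transpose * C).det = (A * A.transpose).det * (B.transpose * B).det := by
    rw [hCtC, Matrix.det_fromBlocks_zero₂₁]
  have hUtU : (U.transpose * U) = (M.transpose * M).submatrix e₀ e₀ := by
    ext j k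
    rw [Matrix.mul_apply, Matrix.submatrix_apply, Matrix.mul_apply]
    exact Finset.sum_congr rfl fun i _ => rfl
  have hdetM : M.det * M.det = 1 := by
    have hu : IsUnit M.det := Matrix.isUnit_det_of_invertible M
    rcases Int.isUnit_iff.mp hu with h | h <;> rw [h] <;> norm_num
  have hdetUtU : (U.transpose * U).det = 1 := by
    rw [hUtU, Matrix.det_submatrix_equiv_self, Matrix.det_mul, Matrix.det_transpose, hdetM]
  have hUtC : U.transpose * C = Matrix.fromBlocks (Dm.transpose * A.transpose)
      (Dm.transpose * B) 0 (B.transpose * B) := by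
    rw [hUeq, hC, Matrix.transpose_fromCols, Matrix.fromRows_mul_fromCols, hBtAt]
  have hdetUtC : (U.transpose * C).det = (A * Dm).det * (B.transpose * B).det := by
    rw [hUtC, Matrix.det_fromBlocks_zero₂₁, ← Matrix.transpose_mul, Matrix.det_transpose]
  have hdetV : V.det = (A * Dm).det * (B.transpose * B).det := by
    have h1 : U.transpose * C = (U.transpose * U) * V := by
      rw [← hUV, Matrix.mul_assoc]
    have h2 := congrArg Matrix.det h1
    rw [Matrix.det_mul, hdetUtU, one_mul] at h2
    rw [← h2, hdetUtC]
  have hdet2 : (C.transpose * C).det = V.det * V.det := by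
    have h1 : C.transpose * C = V.transpose * ((U.transpose * U) * V) := by
      rw [← hUV, Matrix.transpose_mul, Matrix.mul_assoc, ← Matrix.mul_assoc U.transpose U V]
    rw [h1, Matrix.det_mul, Matrix.det_mul, hdetUtU, Matrix.det_transpose]
    ring
  have hmain : (A * A.transpose).det = (A * Dm).det ^ 2 * (B.transpose * B).det := by
    have hkey : (A * A.transpose).det * (B.transpose * B).det
        = ((A * Dm).det ^ 2 * (B.transpose * B).det) * (B.transpose * B).det := by
      rw [← hdet1, hdet2, hdetV]; ring
    exact mul_right_cancel₀ hBdet hkey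
  -- gcd of minors equals |det (A * Dm)|
  have hAU : A * U = Matrix.fromCols (A * Dm) 0 := by
    rw [hUeq, Matrix.mul_fromCols, hAB]
  have hminor : ∀ f : Fin m ↪ Fin n, (A * Dm).det ∣ (A.submatrix id (⇑f)).det := by
    intro f
    have hsub : (A * (U * W)).submatrix id (⇑f) = (A * U) * (W.submatrix id (⇑f)) := by
      rw [← Matrix.mul_assoc]
      ext i k
      rw [Matrix.submatrix_apply, Matrix.mul_apply, Matrix.mul_apply]
      exact Finset.sum_congr rfl fun j _ => rfl
    have h1 : A.submatrix id (⇑f) = (A * U) * (W.submatrix id (⇑f)) := by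
      rw [← hsub, hUW, Matrix.mul_one]
    have h2 : Matrix.fromCols (A * Dm) (0 : Matrix (Fin m) (Fin (n - m)) ℤ) * (W.submatrix id (⇑f))
        = (A * Dm) * ((W.submatrix id (⇑f)).submatrix Sum.inl id) := by
      ext i k
      rw [Matrix.mul_apply, Matrix.mul_apply, Fintype.sum_sum_type]
      simp [Matrix.fromCols]
    rw [h1, hAU, h2, Matrix.det_mul]
    exact Dvd.intro _ rfl
  have hgdvd : (gcdMinors m n A : ℤ) ∣ (A * Dm).det := gcdMinors_dvd_det_mul m n A Dm
  have hdvdg : ((A * Dm).det).natAbs ∣ gcdMinors m n A :=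
    Finset.dvd_gcd fun f _ => Int.natAbs_dvd_natAbs.mpr (hminor f)
  have habs : ((A * Dm).det).natAbs = gcdMinors m n A :=
    Nat.dvd_antisymm hdvdg (Int.natCast_dvd_natCast.mp (Int.dvd_natAbs.mpr hgdvd))
  have hsq : ((gcdMinors m n A : ℤ)) ^ 2 = (A * Dm).det ^ 2 := by
    rw [← habs, ← Int.abs_eq_natAbs, sq_abs]
  rw [hmain, ← hsq]

/-- if the columns of `B` form an LLL-reduced basis of
`L_N(A) = {x ∈ ℤ^n : Ax = 0}`, then the width of the nullspace reformulation polyhedron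
`Q_N = {y : ℓ₂ - x₀ ≤ By ≤ w₂ - x₀}` along the last unit vector is at most
`gcd(A) · 2^{(n-m-1)/4} ‖w₂ - ℓ₂‖ / det(A Aᵀ)^{1/(2(n-m))}`. -/
theorem nullspace_width_bound (m n : ℕ) (hmn : m < n)
    (A : Matrix (Fin m) (Fin n) ℤ)
    (hA : LinearIndependent ℚ (fun i : Fin m => fun j : Fin n => (A i j : ℚ)))
    (B : Matrix (Fin n) (Fin (n - m)) ℤ)
    (hBnull : ∀ j, A.mulVec (fun i => B i j) = 0)
    (hBspan : ∀ x : Fin n → ℤ, A.mulVec x = 0 → ∃ c : Fin (n - m) → ℤ, x = B.mulVec c)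
    (hlll : LLLReduced (colsE n (n - m) (B.map (Int.cast : ℤ → ℝ))))
    (ℓ₂ w₂ : EuclideanSpace ℝ (Fin n)) (x₀ : Fin n → ℤ)
    (Q : Set (Fin (n - m) → ℝ))
    (hQ : Q = { y | ∀ i, ℓ₂ i - (x₀ i : ℝ) ≤ (B.map (Int.cast : ℤ → ℝ)).mulVec y i ∧
      (B.map (Int.cast : ℤ → ℝ)).mulVec y i ≤ w₂ i - (x₀ i : ℝ) })
    (hne : Q.Nonempty)
    (lastIdx : Fin (n - m)) (hlast : (lastIdx : ℕ) = n - m - 1)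
    (hba : BddAbove ((fun y => y lastIdx) '' Q))
    (hbb : BddBelow ((fun y => y lastIdx) '' Q)) :
    sSup ((fun y => y lastIdx) '' Q) - sInf ((fun y => y lastIdx) '' Q)
      ≤ (gcdMinors m n A : ℝ) * 2 ^ ((((n - m : ℕ) : ℝ) - 1) / 4) * ‖w₂ - ℓ₂‖ /
        (((A * A.transpose).det : ℝ)) ^ ((1 : ℝ) / (2 * ((n - m : ℕ) : ℝ))) := by
  classical
  subst hQ
  have hr1 : 1 ≤ n - m := by omega
  set Br : Matrix (Fin n) (Fin (n - m)) ℝ := B.map (Int.cast : ℤ → ℝ) with hBr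
  set b : Fin (n - m) → EuclideanSpace ℝ (Fin n) := colsE n (n - m) Br with hb
  have hli : LinearIndependent ℝ b := hlll.1
  set s : ℝ := ‖gsE b lastIdx‖ with hs
  have hs_pos : 0 < s := by
    rw [hs]
    exact norm_pos_iff.mpr (InnerProductSpace.gramSchmidt_ne_zero lastIdx hli)
  set W : ℝ := ‖w₂ - ℓ₂‖ with hW
  have hW0 : 0 ≤ W := norm_nonneg _
  -- coordinates of b
  have hbcoord : ∀ (j : Fin (n - m)) (i : Fin n), b j i = Br i j := by
    intro j i
    rfl
  -- the product vector as a combination of the columns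
  have hvec : ∀ z : Fin (n - m) → ℝ,
      ((WithLp.equiv 2 (Fin n → ℝ)).symm (Br.mulVec z) : EuclideanSpace ℝ (Fin n))
        = ∑ j : Fin (n - m), z j • b j := by
    intro z
    ext i
    have h1 : ((WithLp.equiv 2 (Fin n → ℝ)).symm (Br.mulVec z) : EuclideanSpace ℝ (Fin n)) i
        = Br.mulVec z i := rfl
    rw [h1]
    have h2 : (∑ j : Fin (n - m), z j • b j) i = ∑ j : Fin (n - m), z j * Br i j := by
      rw [WithLp.ofLp_sum, Finset.sum_apply]
      exact Finset.sum_congr rfl fun j _ => rfl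
    rw [h2, Matrix.mulVec]
    simp [dotProduct, mul_comm]
  -- key inner product identity
  have hip : ∀ z : Fin (n - m) → ℝ,
      (inner ℝ (gsE b lastIdx)
        ((WithLp.equiv 2 (Fin n → ℝ)).symm (Br.mulVec z) : EuclideanSpace ℝ (Fin n)) : ℝ)
      = z lastIdx * s ^ 2 := by
    intro z
    rw [hvec z, inner_sum]
    rw [Finset.sum_eq_single lastIdx]
    · rw [inner_smul_right, inner_gsE_self b lastIdx]
    · intro j _ hj
      have hjlt : j < lastIdx := by
        rw [Fin.lt_def]
        have := j.isLt
        have hne' : (j : ℕ) ≠ (lastIdx : ℕ) := fun h => hj (Fin.ext h)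
        omega
      rw [inner_smul_right, inner_gsE_of_lt b hjlt]
      ring
    · intro h
      exact absurd (Finset.mem_univ lastIdx) h
  -- component bound
  have hcomp : ∀ y ∈ {y : Fin (n - m) → ℝ | ∀ i, ℓ₂ i - (x₀ i : ℝ) ≤ Br.mulVec y i ∧
        Br.mulVec y i ≤ w₂ i - (x₀ i : ℝ)},
      ∀ y' ∈ {y : Fin (n - m) → ℝ | ∀ i, ℓ₂ i - (x₀ i : ℝ) ≤ Br.mulVec y i ∧
        Br.mulVec y i ≤ w₂ i - (x₀ i : ℝ)},
      ‖((WithLp.equiv 2 (Fin n → ℝ)).symm (Br.mulVec (y - y')) : EuclideanSpace ℝ (Fin n))‖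
        ≤ W := by
    intro y hy y' hy'
    rw [EuclideanSpace.norm_eq, hW, EuclideanSpace.norm_eq]
    apply Real.sqrt_le_sqrt
    apply Finset.sum_le_sum
    intro i _
    have h1 := hy i
    have h2 := hy' i
    have hval : ((WithLp.equiv 2 (Fin n → ℝ)).symm (Br.mulVec (y - y'))
        : EuclideanSpace ℝ (Fin n)) i = Br.mulVec y i - Br.mulVec y' i := by
      have : Br.mulVec (y - y') = Br.mulVec y - Br.mulVec y' := by
        rw [Matrix.mulVec_sub]
      rw [show ((WithLp.equiv 2 (Fin n → ℝ)).symm (Br.mulVec (y - y'))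
        : EuclideanSpace ℝ (Fin n)) i = Br.mulVec (y - y') i from rfl, this]
      rfl
    have hsub : (w₂ - ℓ₂) i = w₂ i - ℓ₂ i := rfl
    rw [hval, Real.norm_eq_abs, Real.norm_eq_abs, sq_abs, sq_abs, hsub]
    apply sq_le_sq'
    · linarith [h1.1, h2.2]
    · linarith [h1.2, h2.1]
  -- width bound
  set S : Set ℝ := (fun y => y lastIdx) '' {y : Fin (n - m) → ℝ |
      ∀ i, ℓ₂ i - (x₀ i : ℝ) ≤ Br.mulVec y i ∧ Br.mulVec y i ≤ w₂ i - (x₀ i : ℝ)} with hS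
  have hSne : S.Nonempty := hne.image _
  have hwidth : sSup S - sInf S ≤ W / s := by
    apply width_bound_aux hSne
    rintro a ⟨y, hy, rfl⟩ a' ⟨y', hy', rfl⟩
    have hcs := real_inner_le_norm (gsE b lastIdx)
      ((WithLp.equiv 2 (Fin n → ℝ)).symm (Br.mulVec (y - y')) : EuclideanSpace ℝ (Fin n))
    rw [hip (y - y')] at hcs
    have hbound := hcomp y hy y' hy'
    have h2 : (y - y') lastIdx * s ^ 2 ≤ s * W := by
      calc (y - y') lastIdx * s ^ 2 ≤ s *
          ‖((WithLp.equiv 2 (Fin n → ℝ)).symm (Br.mulVec (y - y'))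
            : EuclideanSpace ℝ (Fin n))‖ := hcs
        _ ≤ s * W := by
            apply mul_le_mul_of_nonneg_left hbound hs_pos.le
    have hsubl : (y - y') lastIdx = y lastIdx - y' lastIdx := rfl
    rw [hsubl] at h2
    rw [le_div_iff₀ hs_pos]
    have h3 : (y lastIdx - y' lastIdx) * s * s ≤ W * s := by nlinarith [h2]
    exact le_of_mul_le_mul_right h3 hs_pos
  -- linear independence over ℤ
  have hBliZ : LinearIndependent ℤ (fun j : Fin (n - m) => (fun i => B i j : Fin n → ℤ)) := by
    rw [Fintype.linearIndependent_iff]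
    intro g hg j
    have hgR : ∑ j : Fin (n - m), (g j : ℝ) • b j = 0 := by
      ext i
      rw [WithLp.ofLp_sum, Finset.sum_apply]
      have hz : ∀ k : Fin n, (∑ j' : Fin (n - m), g j' • (fun i' => B i' j')) k = 0 := fun k =>
        congrFun hg k
      have := hz i
      simp only [Finset.sum_apply, Pi.smul_apply, smul_eq_mul] at this
      have hcast : ((∑ j' : Fin (n - m), g j' * B i j' : ℤ) : ℝ) = 0 := by rw [this]; simp
      push_cast at hcast
      rw [show ((0 : EuclideanSpace ℝ (Fin n)) i) = 0 from rfl]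
      rw [← hcast]
      refine Finset.sum_congr rfl fun j' _ => ?_
      have : b j' i = (B i j' : ℝ) := rfl
      simp [this]
    have := Fintype.linearIndependent_iff.mp hli (fun j => (g j : ℝ)) hgR j
    exact_mod_cast this
  -- Gram determinant
  have hP_pos : 0 < ∏ i : Fin (n - m), ‖gsE b i‖ ^ 2 := by
    apply Finset.prod_pos
    intro i _
    have hnz : gsE b i ≠ 0 := InnerProductSpace.gramSchmidt_ne_zero i hli
    exact pow_pos (norm_pos_iff.mpr hnz) 2
  have hgram : ((B.transpose * B).det : ℝ) = ∏ i : Fin (n - m), ‖gsE b i‖ ^ 2 := by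
    have h1 : ((B.transpose * B).det : ℝ) = (Br.transpose * Br).det := by
      have h2 : ((B.transpose * B).det : ℝ)
          = (Int.castRingHom ℝ) ((B.transpose * B).det) := rfl
      rw [h2, RingHom.map_det]
      simp only [RingHom.mapMatrix_apply]
      rw [Matrix.map_mul, Matrix.transpose_map]
      rfl
    have hmat : (Matrix.of fun i j => (inner ℝ (b i) (b j) : ℝ)) = Br.transpose * Br := by
      ext i j
      rw [Matrix.of_apply, Matrix.mul_apply, PiLp.inner_apply]
      refine Finset.sum_congr rfl fun t _ => ?_
      rw [RCLike.inner_apply, starRingEnd_apply, star_trivial]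
      exact mul_comm _ _
    rw [h1, ← gram_det b hli, hmat]
  have hBdetZ : (B.transpose * B).det ≠ 0 := by
    intro h0
    rw [h0] at hgram
    simp at hgram
    linarith
  -- the determinant identity
  have hAATZ := detAAT_ne_zero m n A hA
  have hdetid := det_AAT_eq_gcd_sq_mul m n hmn A B hBnull hBspan hBliZ hBdetZ
  set g' : ℝ := (gcdMinors m n A : ℝ) with hg'
  set dA : ℝ := ((A * A.transpose).det : ℝ) with hdA
  have hdA_eq : dA = g' ^ 2 * ∏ i : Fin (n - m), ‖gsE b i‖ ^ 2 := by
    rw [hdA, hdetid]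
    rw [Int.cast_mul, Int.cast_pow, Int.cast_natCast]
    rw [hgram]
  have hg1 : 1 ≤ g' := by
    have hgne : gcdMinors m n A ≠ 0 := by
      intro h0
      apply hAATZ
      have : dA = 0 := by rw [hdA_eq, hg', h0]; simp
      rw [hdA] at this
      exact_mod_cast this
    rw [hg']
    exact_mod_cast Nat.one_le_iff_ne_zero.mpr hgne
  have hdA_pos : 0 < dA := by
    rw [hdA_eq]
    exact mul_pos (pow_pos (by linarith) 2) hP_pos
  -- LLL product bound
  set N : ℕ := ∑ i : Fin (n - m), ((n - m - 1) - (i : ℕ)) with hN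
  have hprod : (∏ i : Fin (n - m), ‖gsE b i‖ ^ 2) ≤ (2:ℝ) ^ N * s ^ (2 * (n - m)) := by
    have h1 : ∀ i : Fin (n - m), ‖gsE b i‖ ^ 2 ≤ 2 ^ ((n - m - 1) - (i : ℕ)) * s ^ 2 := by
      intro i
      have := lll_le_last hlll lastIdx hlast i
      rwa [hlast] at this
    calc (∏ i : Fin (n - m), ‖gsE b i‖ ^ 2)
        ≤ ∏ i : Fin (n - m), (2:ℝ) ^ ((n - m - 1) - (i : ℕ)) * s ^ 2 :=
          Finset.prod_le_prod (fun i _ => sq_nonneg _) (fun i _ => h1 i)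
      _ = (∏ i : Fin (n - m), (2:ℝ) ^ ((n - m - 1) - (i : ℕ)))
            * ∏ _i : Fin (n - m), s ^ 2 := Finset.prod_mul_distrib
      _ = (2:ℝ) ^ N * s ^ (2 * (n - m)) := by
          rw [Finset.prod_pow_eq_pow_sum, Finset.prod_const, ← pow_mul]
          simp [hN, mul_comm]
  have hN2 : 2 * N = (n - m) * ((n - m) - 1) := by
    have h1 : N = ∑ i ∈ Finset.range (n - m), ((n - m - 1) - i) := by
      rw [hN, Fin.sum_univ_eq_sum_range]
    have h2 : ∑ i ∈ Finset.range (n - m), ((n - m - 1) - i)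
        = ∑ i ∈ Finset.range (n - m), i := by
      rw [← Finset.sum_range_reflect]
      apply Finset.sum_congr rfl
      intro i hi
      have := Finset.mem_range.mp hi
      omega
    rw [h1, h2]
    have := Finset.sum_range_id_mul_two (n - m)
    omega
  set c : ℝ := (2:ℝ) ^ ((((n - m : ℕ) : ℝ) - 1) / 4) with hc
  have hc_pos : 0 < c := Real.rpow_pos_of_pos (by norm_num) _
  have hc2r : c ^ (2 * (n - m)) = (2:ℝ) ^ N := by
    rw [hc, ← Real.rpow_natCast ((2:ℝ) ^ ((((n - m : ℕ) : ℝ) - 1) / 4)) (2 * (n - m)),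
      ← Real.rpow_mul (by norm_num : (0:ℝ) ≤ 2), ← Real.rpow_natCast (2:ℝ) N]
    congr 1
    have hcast1 : ((n - m : ℕ) : ℝ) - 1 = ((n - m - 1 : ℕ) : ℝ) := by
      rw [Nat.cast_sub hr1]
      norm_num
    have hcast2 : (2:ℝ) * (N : ℝ) = ((n - m : ℕ) : ℝ) * (((n - m : ℕ) : ℝ) - 1) := by
      rw [hcast1]
      exact_mod_cast congrArg (Nat.cast : ℕ → ℝ) hN2
    rw [show ((2 * (n - m) : ℕ) : ℝ) = 2 * ((n - m : ℕ) : ℝ) by push_cast; ring]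
    linear_combination -hcast2 / 2
  -- final key inequality
  set x : ℝ := g' * c * s with hx
  have hx0 : 0 ≤ x := by
    have : (0:ℝ) ≤ g' := by linarith
    exact mul_nonneg (mul_nonneg this hc_pos.le) hs_pos.le
  have hdAle : dA ≤ x ^ (2 * (n - m)) := by
    rw [hdA_eq, hx, mul_pow, mul_pow]
    calc g' ^ 2 * ∏ i : Fin (n - m), ‖gsE b i‖ ^ 2
        ≤ g' ^ 2 * ((2:ℝ) ^ N * s ^ (2 * (n - m))) :=
          mul_le_mul_of_nonneg_left hprod (sq_nonneg g')
      _ = g' ^ 2 * (c ^ (2 * (n - m)) * s ^ (2 * (n - m))) := by rw [hc2r]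
      _ ≤ g' ^ (2 * (n - m)) * (c ^ (2 * (n - m)) * s ^ (2 * (n - m))) := by
          apply mul_le_mul_of_nonneg_right _
            (mul_nonneg (pow_nonneg hc_pos.le _) (pow_nonneg hs_pos.le _))
          exact pow_le_pow_right₀ hg1 (by omega)
      _ = g' ^ (2 * (n - m)) * c ^ (2 * (n - m)) * s ^ (2 * (n - m)) := by ring
  have hkey2 : dA ^ ((1 : ℝ) / (2 * ((n - m : ℕ) : ℝ))) ≤ x := by
    have hstep : dA ^ ((1 : ℝ) / (2 * ((n - m : ℕ) : ℝ)))
        ≤ (x ^ (2 * (n - m))) ^ ((1 : ℝ) / (2 * ((n - m : ℕ) : ℝ))) := by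
      apply Real.rpow_le_rpow hdA_pos.le hdAle
      positivity
    have hid : (x ^ (2 * (n - m))) ^ ((1 : ℝ) / (2 * ((n - m : ℕ) : ℝ))) = x := by
      rw [← Real.rpow_natCast x (2 * (n - m)), ← Real.rpow_mul hx0]
      rw [show ((2 * (n - m) : ℕ) : ℝ) * ((1 : ℝ) / (2 * ((n - m : ℕ) : ℝ))) = 1 from ?_]
      · exact Real.rpow_one x
      · push_cast
        rw [mul_one_div]
        apply div_self
        have : (0:ℝ) < ((n - m : ℕ) : ℝ) := by exact_mod_cast hr1
        positivity
    rw [← hid]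
    exact hstep
  -- conclude
  have hfinal : W / s ≤ g' * c * W / dA ^ ((1 : ℝ) / (2 * ((n - m : ℕ) : ℝ))) := by
    rw [div_le_div_iff₀ hs_pos (Real.rpow_pos_of_pos hdA_pos _)]
    calc W * dA ^ ((1 : ℝ) / (2 * ((n - m : ℕ) : ℝ))) ≤ W * x :=
        mul_le_mul_of_nonneg_left hkey2 hW0
      _ = g' * c * W * s := by rw [hx]; ring
  calc sSup S - sInf S ≤ W / s := hwidth
    _ ≤ g' * c * W / dA ^ ((1 : ℝ) / (2 * ((n - m : ℕ) : ℝ))) := hfinal
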